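/- Let D be a real graded division algebra admitting a degree-preserving involution φ_0 restricting to conjugation on D_e, and suppose it is not the case that ℂ ≅ D_e ⊆ Z(D). Then every automorphism of D as a graded algebra commutes with φ_0. -/

import Mathlib

variable {G : Type*} [CommGroup G] [DecidableEq G] {D : Type*} [Ring D] [Algebra ℝ D]

set_option linter.unusedSectionVars false
set_option linter.unusedVariables false
set_option maxHeartbeats 2000000

lemma aux_inv_mem (comp : G → Submodule ℝ D)
    (hint : DirectSum.IsInternal comp) (hone : (1 : D) ∈ comp 1)
    (hmul : ∀ (g h : G) (a b : D), a ∈ comp g → b ∈ comp h → a * b ∈ comp (g * h))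
    {g : G} {a b : D} (ha : a ∈ comp g) (hab : a * b = 1) (hba : b * a = 1) :
    b ∈ comp g⁻¹ := by
  classical
  obtain ⟨hind, htop⟩ := (DirectSum.isInternal_submodule_iff_iSupIndep_and_iSup_eq_top comp).1 hint
  have hbtop : b ∈ iSup comp := htop ▸ Submodule.mem_top
  obtain ⟨f, hf⟩ := (Submodule.mem_iSup_iff_exists_dfinsupp' comp b).1 hbtop
  -- b = ∑ over support of f
  have hsum : (∑ i ∈ f.support, (f i : D)) = b := hf
  -- 1 = ∑ (f i) * a
  have h1 : (∑ i ∈ f.support, (f i : D) * a) = 1 := by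
    rw [← Finset.sum_mul, hsum, hba]
  -- the term at g⁻¹
  set c : D := (f g⁻¹ : D) * a with hc
  have hcmem : c ∈ comp 1 := by
    have := hmul g⁻¹ g _ _ (f g⁻¹).2 ha
    simpa using this
  have hw : (1 : D) - c ∈ comp 1 := sub_mem hone hcmem
  have hwsup : (1 : D) - c ∈ ⨆ (h : G) (_ : h ≠ (1 : G)), comp h := by
    by_cases hmemg : g⁻¹ ∈ f.support
    · have : (1 : D) - c = ∑ i ∈ f.support.erase g⁻¹, (f i : D) * a := by
        have := Finset.sum_erase_add f.support (fun i => (f i : D) * a) hmemg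
        rw [← h1]; rw [← this, hc]; simp
      rw [this]
      refine Submodule.sum_mem _ ?_
      intro i hi
      have hig : i ≠ g⁻¹ := (Finset.mem_erase.1 hi).1
      have hmem : (f i : D) * a ∈ comp (i * g) := hmul i g _ _ (f i).2 ha
      have hne : i * g ≠ 1 := by
        intro h; exact hig (eq_inv_of_mul_eq_one_left h)
      exact Submodule.mem_iSup_of_mem (i * g) (Submodule.mem_iSup_of_mem hne hmem)
    · have hz : (f g⁻¹ : D) = 0 := by
        simpa using (DFinsupp.notMem_support_iff.1 hmemg)
      have : (1 : D) - c = ∑ i ∈ f.support, (f i : D) * a := by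
        rw [h1, hc, hz]; simp
      rw [this]
      refine Submodule.sum_mem _ ?_
      intro i hi
      have hig : i ≠ g⁻¹ := by rintro rfl; exact hmemg hi
      have hmem : (f i : D) * a ∈ comp (i * g) := hmul i g _ _ (f i).2 ha
      have hne : i * g ≠ 1 := fun h => hig (eq_inv_of_mul_eq_one_left h)
      exact Submodule.mem_iSup_of_mem (i * g) (Submodule.mem_iSup_of_mem hne hmem)
  have hzero : (1 : D) - c = 0 := by
    have hd := hind (1 : G)
    exact (Submodule.disjoint_def.1 hd) _ hw hwsup
  have hca : c = 1 := (sub_eq_zero.1 hzero).symm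
  -- c = f g⁻¹ * a = 1, so b = f g⁻¹
  have hb : b = (f g⁻¹ : D) := by
    have : (f g⁻¹ : D) * (a * b) = (f g⁻¹ : D) := by rw [hab, mul_one]
    calc b = 1 * b := (one_mul b).symm
    _ = ((f g⁻¹ : D) * a) * b := by rw [← hc, hca]
    _ = (f g⁻¹ : D) * (a * b) := by rw [mul_assoc]
    _ = (f g⁻¹ : D) := this
  rw [hb]; exact (f g⁻¹).2

lemma aux_zero_of_unit_mul {a b : D} (ha : IsUnit a) (hab : a * b = 0) : b = 0 := by
  obtain ⟨u, rfl⟩ := ha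
  calc b = ↑u⁻¹ * (↑u * b) := by rw [← mul_assoc, Units.inv_mul, one_mul]
  _ = 0 := by rw [hab, mul_zero]

lemma aux_smul_cancel {c : ℝ} (hc : c ≠ 0) {x : D} (h : c • x = 0) : x = 0 := by
  have := congrArg (fun y => c⁻¹ • y) h
  simpa [smul_smul, inv_mul_cancel₀ hc] using this

lemma aux_smul_cancel' {c : ℝ} (hc : c ≠ 0) {x y : D} (h : c • x = c • y) : x = y := by
  have : c • (x - y) = 0 := by rw [smul_sub, h, sub_self]
  have := aux_smul_cancel hc this
  rwa [sub_eq_zero] at this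

lemma aux_shift_sq {z : D} {r s : ℝ} (hq : r • z - z * z = s • (1 : D)) :
    (z - (r/2) • (1 : D)) * (z - (r/2) • (1 : D)) = (r^2/4 - s) • (1 : D) := by
  have hzz : z * z = r • z - s • (1 : D) := by
    have : z * z = r • z - (r • z - z * z) := by abel
    rw [this, hq]
  have e1 : (z - (r/2) • (1 : D)) * (z - (r/2) • (1 : D))
      = z * z - (r/2) • z - (r/2) • z + (r/2*(r/2)) • (1 : D) := by
    simp only [sub_mul, mul_sub, smul_sub, smul_add, mul_add, mul_smul_comm, smul_mul_assoc, smul_smul, mul_one, one_mul]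
    abel
  rw [e1, hzz]
  module
lemma aux_sq_real (comp : G → Submodule ℝ D) (hone : (1 : D) ∈ comp 1)
    (hunit : ∀ (g : G) (a : D), a ∈ comp g → a ≠ 0 → IsUnit a)
    {u : D} (hu : u ∈ comp 1) {c : ℝ} (hc : 0 ≤ c) (hsq : u * u = c • (1 : D)) :
    ∃ a : ℝ, u = a • (1 : D) := by
  set μ := Real.sqrt c with hμdef
  have hμ : μ * μ = c := Real.mul_self_sqrt hc
  have hfact : (u - μ • 1) * (u + μ • (1 : D)) = 0 := by
    have e1 : (u - μ • 1) * (u + μ • (1 : D))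
        = u * u + μ • u - μ • u - (μ * μ) • (1 : D) := by
      simp only [sub_mul, mul_sub, mul_add, smul_add, smul_sub, mul_smul_comm, smul_mul_assoc, smul_smul, mul_one, one_mul]
      abel
    rw [e1, hsq, hμ]; abel
  rcases eq_or_ne (u - μ • (1 : D)) 0 with h0 | hne
  · exact ⟨μ, by rw [← sub_eq_zero]; exact h0⟩
  · have hmem : u - μ • (1 : D) ∈ comp 1 := sub_mem hu (Submodule.smul_mem _ _ hone)
    have := aux_zero_of_unit_mul (hunit 1 _ hmem hne) hfact
    exact ⟨-μ, by rw [neg_smul, ← sub_eq_zero, sub_neg_eq_add]; exact this⟩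

lemma aux_sq_j (comp : G → Submodule ℝ D) (hunit : ∀ (g : G) (a : D), a ∈ comp g → a ≠ 0 → IsUnit a)
    {u j : D} (hu : u ∈ comp 1) (hj : j ∈ comp 1) (hjj : j * j = -1)
    (hcom : u * j = j * u) {c : ℝ} (hc : c < 0) (hsq : u * u = c • (1 : D)) :
    ∃ b : ℝ, u = b • j := by
  set μ := Real.sqrt (-c) with hμdef
  have hμ : μ * μ = -c := Real.mul_self_sqrt (by linarith)
  have hfact : (u - μ • j) * (u + μ • j) = 0 := by
    have e1 : (u - μ • j) * (u + μ • j)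
        = u * u + μ • (u * j) - μ • (j * u) - (μ * μ) • (j * j) := by
      simp only [sub_mul, mul_sub, mul_add, smul_add, smul_sub, mul_smul_comm, smul_mul_assoc, smul_smul]
      abel
    rw [e1, hcom, hsq, hjj, hμ]
    simp only [neg_smul, smul_neg, neg_neg]
    abel
  rcases eq_or_ne (u - μ • j) 0 with h0 | hne
  · exact ⟨μ, by rw [← sub_eq_zero]; exact h0⟩
  · have hmem : u - μ • j ∈ comp 1 := sub_mem hu (Submodule.smul_mem _ _ hj)
    have := aux_zero_of_unit_mul (hunit 1 _ hmem hne) hfact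
    exact ⟨-μ, by rw [neg_smul, ← sub_eq_zero, sub_neg_eq_add]; exact this⟩

lemma aux_mulform {j : D} (hjj : j * j = -1) (a b a' b' : ℝ) :
    (a • (1 : D) + b • j) * (a' • (1 : D) + b' • j)
      = (a*a' - b*b') • (1 : D) + (a*b' + b*a') • j := by
  simp only [add_mul, mul_add, smul_add, mul_smul_comm, smul_mul_assoc, smul_smul,
    mul_one, one_mul, hjj, smul_neg]
  module

lemma aux_indep (h1 : (1 : D) ≠ 0) {j : D} (hjj : j * j = -1) :
    ∀ a b : ℝ, a • (1 : D) + b • j = 0 → a = 0 ∧ b = 0 := by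
  intro a b h
  by_cases hb : b = 0
  · subst hb
    refine ⟨?_, rfl⟩
    rw [zero_smul, add_zero] at h
    by_contra ha
    exact h1 (aux_smul_cancel ha h)
  · exfalso
    have h' : b • j = (-a) • (1:D) := by
      rw [neg_smul]; exact eq_neg_of_add_eq_zero_right h
    have hj : j = (-(a/b)) • (1 : D) := by
      have := congrArg (fun y => b⁻¹ • y) h'
      simp only [smul_smul, inv_mul_cancel₀ hb, one_smul] at this
      rw [this]
      congr 1
      field_simp
    have hsq : ((-(a/b)) * (-(a/b))) • (1:D) = -1 := by
      have e2 : ((-(a/b)) • (1:D)) * ((-(a/b)) • (1:D)) = ((-(a/b)) * (-(a/b))) • (1:D) := by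
        rw [smul_mul_assoc, mul_smul_comm, smul_smul, mul_one]
      rw [← e2, ← hj, hjj]
    have h2 : ((-(a/b)) * (-(a/b)) + 1) • (1:D) = 0 := by
      rw [add_smul, hsq, one_smul]; abel
    have hpos : (-(a/b)) * (-(a/b)) + 1 ≠ 0 := by nlinarith [sq_nonneg (a/b)]
    exact h1 (aux_smul_cancel hpos h2)

lemma aux_buildj (comp : G → Submodule ℝ D) (hone : (1 : D) ∈ comp 1)
    (hunit : ∀ (g : G) (a : D), a ∈ comp g → a ≠ 0 → IsUnit a)
    (hquad : ∀ z ∈ comp (1 : G), ∃ r s : ℝ, r • z - z * z = s • (1 : D))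
    {z₀ : D} (hz0 : z₀ ∈ comp 1) (hnr : ∀ c : ℝ, z₀ ≠ c • (1 : D)) :
    ∃ j, j ∈ comp (1 : G) ∧ j * j = -1 ∧ ∃ k k' : ℝ, j = k • z₀ + k' • (1 : D) := by
  obtain ⟨r, s, hq⟩ := hquad z₀ hz0
  set e := z₀ - (r/2) • (1 : D) with he
  have hemem : e ∈ comp 1 := sub_mem hz0 (Submodule.smul_mem _ _ hone)
  have hesq : e * e = (r^2/4 - s) • (1 : D) := aux_shift_sq hq
  have hc0 : r^2/4 - s < 0 := by
    by_contra hcge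
    push_neg at hcge
    obtain ⟨a, ha⟩ := aux_sq_real comp hone hunit hemem hcge hesq
    refine hnr (a + r/2) ?_
    rw [he] at ha
    rw [add_smul, ← ha]
    abel
  set μ := Real.sqrt (s - r^2/4) with hμdef
  have hμpos : (0:ℝ) < μ := Real.sqrt_pos.2 (by linarith)
  have hμsq : μ * μ = s - r^2/4 := Real.mul_self_sqrt (by linarith)
  refine ⟨μ⁻¹ • e, Submodule.smul_mem _ _ hemem, ?_, μ⁻¹, -(μ⁻¹ * (r/2)), ?_⟩
  · rw [smul_mul_assoc, mul_smul_comm, smul_smul, hesq, smul_smul]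
    have : μ⁻¹ * μ⁻¹ * (r ^ 2 / 4 - s) = -1 := by
      field_simp
      nlinarith [hμsq]
    rw [this, neg_one_smul]
  · rw [he]
    module

lemma aux_span_j (comp : G → Submodule ℝ D) (hone : (1 : D) ∈ comp 1)
    (hunit : ∀ (g : G) (a : D), a ∈ comp g → a ≠ 0 → IsUnit a)
    (hquad : ∀ z ∈ comp (1 : G), ∃ r s : ℝ, r • z - z * z = s • (1 : D))
    {j : D} (hj : j ∈ comp 1) (hjj : j * j = -1)
    (hjc : ∀ w ∈ comp (1 : G), j * w = w * j) :
    ∀ z ∈ comp (1 : G), ∃ a b : ℝ, z = a • (1 : D) + b • j := by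
  intro z hz
  obtain ⟨r, s, hq⟩ := hquad z hz
  set u := z - (r/2) • (1 : D) with hu
  have humem : u ∈ comp 1 := sub_mem hz (Submodule.smul_mem _ _ hone)
  have husq : u * u = (r^2/4 - s) • (1 : D) := aux_shift_sq hq
  rcases le_or_gt 0 (r^2/4 - s) with hc | hc
  · obtain ⟨a, ha⟩ := aux_sq_real comp hone hunit humem hc husq
    refine ⟨r/2 + a, 0, ?_⟩
    rw [zero_smul, add_zero, add_smul, ← ha, hu]
    abel
  · have hcomj : u * j = j * u := (hjc u humem).symm
    obtain ⟨b, hb⟩ := aux_sq_j comp hunit humem hj hjj hcomj hc husq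
    refine ⟨r/2, b, ?_⟩
    rw [← hb, hu]
    abel

lemma aux_center (comp : G → Submodule ℝ D) (hone : (1 : D) ∈ comp 1)
    (hunit : ∀ (g : G) (a : D), a ∈ comp g → a ≠ 0 → IsUnit a)
    (hquad : ∀ z ∈ comp (1 : G), ∃ r s : ℝ, r • z - z * z = s • (1 : D))
    (hnc : ¬ ∀ z ∈ comp (1 : G), ∀ w ∈ comp (1 : G), z * w = w * z)
    {d : D} (hd : d ∈ comp 1) (hdc : ∀ w ∈ comp (1 : G), d * w = w * d) :
    ∃ c : ℝ, d = c • (1 : D) := by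
  by_contra hnr
  push_neg at hnr
  obtain ⟨j, hjmem, hjj, k, k', hjd⟩ := aux_buildj comp hone hunit hquad hd hnr
  have hjc : ∀ w ∈ comp (1 : G), j * w = w * j := by
    intro w hw
    rw [hjd, add_mul, mul_add, smul_mul_assoc, smul_mul_assoc, mul_smul_comm,
      mul_smul_comm, hdc w hw, one_mul, mul_one]
  have hspan := aux_span_j comp hone hunit hquad hjmem hjj hjc
  apply hnc
  intro z hz w hw
  obtain ⟨a, b, rfl⟩ := hspan z hz
  obtain ⟨a', b', rfl⟩ := hspan w hw
  rw [aux_mulform hjj, aux_mulform hjj]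
  ring_nf

lemma aux_homog_noncomm (comp : G → Submodule ℝ D)
    (hint : DirectSum.IsInternal comp) {j x : D} (h : j * x ≠ x * j) :
    ∃ g : G, ∃ y ∈ comp g, j * y ≠ y * j := by
  classical
  by_contra hall
  push_neg at hall
  apply h
  obtain ⟨hind, htop⟩ := (DirectSum.isInternal_submodule_iff_iSupIndep_and_iSup_eq_top comp).1 hint
  have hxtop : x ∈ iSup comp := htop ▸ Submodule.mem_top
  obtain ⟨f, hf⟩ := (Submodule.mem_iSup_iff_exists_dfinsupp' comp x).1 hxtop
  have hsum : (∑ i ∈ f.support, (f i : D)) = x := hf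
  rw [← hsum, Finset.mul_sum, Finset.sum_mul]
  refine Finset.sum_congr rfl (fun i _ => ?_)
  exact hall i (f i) (f i).2



/-- A real graded division algebra. -/
def IsGDA (comp : G → Submodule ℝ D) : Prop :=
  DirectSum.IsInternal comp ∧ (1 : D) ∈ comp 1 ∧
    (∀ (g h : G) (a b : D), a ∈ comp g → b ∈ comp h → a * b ∈ comp (g * h)) ∧
    ∀ (g : G) (a : D), a ∈ comp g → a ≠ 0 → IsUnit a

/-- Unless `ℂ ≅ D_e ⊆ Z(D)`, every automorphism of the real graded division
algebra `D` (as a graded algebra) commutes with the degree-preserving involution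
`φ₀` restricting to the conjugation on `D_e`. -/
theorem stmt_9 (comp : G → Submodule ℝ D) (hgda : IsGDA comp)
    (hfd : FiniteDimensional ℝ ↥(comp (1 : G)))
    (T : Subgroup G) (hT : ∀ g : G, comp g ≠ ⊥ ↔ g ∈ T)
    (X : ↥T → Dˣ) (hX : ∀ t : ↥T, (X t : D) ∈ comp (t : G))
    -- when `D_e` is noncommutative (≅ ℍ), the `X_t` are chosen in the centralizer of `D_e`
    (hXcent : ¬(∀ z ∈ comp (1 : G), ∀ w ∈ comp (1 : G), z * w = w * z) →
      ∀ (t : ↥T), ∀ z ∈ comp (1 : G), (X t : D) * z = z * (X t : D))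
    (φ : D ≃ₗ[ℝ] D)
    (hanti : ∀ x y : D, φ (x * y) = φ y * φ x)
    (hinvol : ∀ x : D, φ (φ x) = x)
    (hgr : ∀ (g : G), ∀ x ∈ comp g, φ x ∈ comp g)
    (hconj : ∀ z ∈ comp (1 : G),
      (∃ r : ℝ, z + φ z = algebraMap ℝ D r) ∧ ∃ r : ℝ, 0 ≤ r ∧ z * φ z = algebraMap ℝ D r)
    (η : ↥T → ℝ) (hη : ∀ t : ↥T, η t = 1 ∨ η t = -1)
    (hφX : ∀ t : ↥T, φ (X t : D) = η t • (X t : D))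
    -- it is not the case that `ℂ ≅ D_e ⊆ Z(D)`
    (hexc : ¬((Module.finrank ℝ ↥(comp (1 : G)) = 2) ∧
      ∀ z ∈ comp (1 : G), ∀ x : D, z * x = x * z)) :
    ∀ ψ : D ≃ₐ[ℝ] D, (∀ (g : G), ∀ x ∈ comp g, ψ x ∈ comp g) →
      ∀ x : D, ψ (φ x) = φ (ψ x) := by
  classical
  obtain ⟨hint, hone, hmul, hunit⟩ := hgda
  intro ψ hψ
  by_cases htriv : (1 : D) = 0
  · intro x
    have h0 : ∀ y : D, y = 0 := fun y => by
      calc y = y * 1 := (mul_one y).symm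
      _ = 0 := by rw [htriv, mul_zero]
    rw [h0 (ψ (φ x)), h0 (φ (ψ x))]
  have hφ1 : φ (1 : D) = 1 := by
    have h1 : ∀ y : D, φ (1 : D) * y = y := by
      intro y
      have := hanti (φ y) 1
      rw [mul_one, hinvol] at this
      exact this.symm
    have h2 := h1 1
    rwa [mul_one] at h2
  have hφs : ∀ (c : ℝ), φ (c • (1 : D)) = c • (1 : D) := fun c => by
    rw [map_smul, hφ1]
  have hψs : ∀ (c : ℝ), ψ (c • (1 : D)) = c • (1 : D) := fun c => by
    rw [map_smul, map_one]
  have halg : ∀ r : ℝ, algebraMap ℝ D r = r • (1 : D) := fun r =>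
    Algebra.algebraMap_eq_smul_one r
  have hφz : ∀ z ∈ comp (1 : G), ∃ r s : ℝ,
      φ z = r • (1 : D) - z ∧ r • z - z * z = s • (1 : D) := by
    intro z hz
    obtain ⟨⟨r, hr⟩, s, _, hs⟩ := hconj z hz
    rw [halg] at hr hs
    have hφr : φ z = r • (1 : D) - z := by rw [← hr]; abel
    refine ⟨r, s, hφr, ?_⟩
    rw [← hs, hφr, mul_sub, mul_smul_comm, mul_one]
  have hquad : ∀ z ∈ comp (1 : G), ∃ r s : ℝ, r • z - z * z = s • (1 : D) := by
    intro z hz; obtain ⟨r, s, _, h⟩ := hφz z hz; exact ⟨r, s, h⟩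
  have claimA : ∀ z ∈ comp (1 : G), ψ (φ z) = φ (ψ z) := by
    intro z hz
    obtain ⟨r, s, hφr, hq⟩ := hφz z hz
    have hψz : ψ z ∈ comp 1 := hψ 1 z hz
    obtain ⟨r', s', hφr', hq'⟩ := hφz (ψ z) hψz
    by_cases hrr : r = r'
    · rw [hφr, map_sub, hψs, hφr', hrr]
    · have h1 : r • (ψ z) - ψ z * ψ z = s • (1 : D) := by
        have h0 := congrArg ψ hq
        rwa [map_sub, map_smul, map_mul, hψs] at h0
      have h2 : (r - r') • (ψ z) = (s - s') • (1 : D) := by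
        rw [sub_smul, sub_smul, ← h1, ← hq']
        abel
      have hne : r - r' ≠ 0 := sub_ne_zero.2 hrr
      have hzval : ψ z = ((r - r')⁻¹ * (s - s')) • (1 : D) := by
        have h3 := congrArg (fun y => (r - r')⁻¹ • y) h2
        simp only [smul_smul, inv_mul_cancel₀ hne, one_smul] at h3
        exact h3
      have hzz : z = ((r - r')⁻¹ * (s - s')) • (1 : D) := by
        apply ψ.injective
        rw [hzval, hψs]
      rw [hzz, hφs, hψs, hφs]
  
  have hXinv : ∀ t : ↥T, (((X t)⁻¹ : Dˣ) : D) ∈ comp ((t : G))⁻¹ := fun t =>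
    aux_inv_mem comp hint hone hmul (hX t) (Units.mul_inv _) (Units.inv_mul _)
  suffices claimB : ∀ t : ↥T, ψ (φ (X t : D)) = φ (ψ (X t : D)) by
    intro x
    let S : Submodule ℝ D :=
      { carrier := {y : D | ψ (φ y) = φ (ψ y)}
        add_mem' := fun {a b} ha hb => by
          simp only [Set.mem_setOf_eq, map_add] at *
          rw [ha, hb]
        zero_mem' := by simp only [Set.mem_setOf_eq, map_zero]
        smul_mem' := fun c a ha => by
          simp only [Set.mem_setOf_eq, map_smul] at *
          rw [ha] }
    have hcomp : ∀ g : G, comp g ≤ S := by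
      intro g y hy
      by_cases hgT : g ∈ T
      · have hXt : (X ⟨g, hgT⟩ : D) ∈ comp g := hX ⟨g, hgT⟩
        have hzmem : y * (((X ⟨g, hgT⟩)⁻¹ : Dˣ) : D) ∈ comp (1 : G) := by
          have h1 := hmul g g⁻¹ _ _ hy (hXinv ⟨g, hgT⟩)
          rwa [mul_inv_cancel] at h1
        have hyz : y = (y * (((X ⟨g, hgT⟩)⁻¹ : Dˣ) : D)) * (X ⟨g, hgT⟩ : D) := by
          rw [mul_assoc, Units.inv_mul, mul_one]
        show ψ (φ y) = φ (ψ y)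
        rw [hyz, hanti, map_mul, claimB ⟨g, hgT⟩, claimA _ hzmem, ← hanti, ← map_mul]
      · have hbot : comp g = ⊥ := by
          by_contra hne
          exact hgT ((hT g).1 hne)
        have hy0 : y = 0 := by
          rw [hbot] at hy
          simpa using hy
        show ψ (φ y) = φ (ψ y)
        simp only [hy0, map_zero]
    have htop := hint.submodule_iSup_eq_top
    have hle : (⊤ : Submodule ℝ D) ≤ S := by
      rw [← htop]
      exact iSup_le hcomp
    exact hle Submodule.mem_top
  intro t
  have hyyi : (X t : D) * (((X t)⁻¹ : Dˣ) : D) = 1 := Units.mul_inv _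
  have hyiy : (((X t)⁻¹ : Dˣ) : D) * (X t : D) = 1 := Units.inv_mul _
  have hymem : (X t : D) ∈ comp ((t : G)) := hX t
  have hyimem : (((X t)⁻¹ : Dˣ) : D) ∈ comp ((t : G))⁻¹ := hXinv t
  set y : D := (X t : D) with hydef
  set yi : D := (((X t)⁻¹ : Dˣ) : D) with hyidef
  set d : D := ψ y * yi with hddef
  have hdmem : d ∈ comp (1 : G) := by
    have h1 := hmul (t : G) ((t : G))⁻¹ _ _ (hψ _ y hymem) hyimem
    rwa [mul_inv_cancel] at h1
  have hdy : ψ y = d * y := by rw [hddef, mul_assoc, hyiy, mul_one]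
  have hdunit : IsUnit d := by
    refine IsUnit.mul ?_ ((X t)⁻¹).isUnit
    exact (X t).isUnit.map ψ
  suffices hkey : d * y = y * φ d by
    calc ψ (φ y) = ψ (η t • y) := by rw [hφX t]
    _ = η t • (d * y) := by rw [map_smul, hdy]
    _ = η t • (y * φ d) := by rw [hkey]
    _ = (η t • y) * φ d := by rw [smul_mul_assoc]
    _ = φ y * φ d := by rw [hφX t]
    _ = φ (d * y) := (hanti d y).symm
    _ = φ (ψ y) := by rw [← hdy]
  by_cases hcomm : ∀ z ∈ comp (1 : G), ∀ w ∈ comp (1 : G), z * w = w * z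
  · -- commutative identity component
    by_cases hreal : ∀ z ∈ comp (1 : G), ∃ c : ℝ, z = c • (1 : D)
    · obtain ⟨c, hc⟩ := hreal d hdmem
      rw [hc, hφs, smul_mul_assoc, mul_smul_comm, one_mul, mul_one]
    · -- the complex case
      push_neg at hreal
      obtain ⟨z₁, hz₁mem, hz₁nr⟩ := hreal
      obtain ⟨j, hjmem, hjj, _⟩ := aux_buildj comp hone hunit hquad hz₁mem hz₁nr
      have hindep := aux_indep htriv hjj
      have hjc : ∀ w ∈ comp (1 : G), j * w = w * j := fun w hw => hcomm j hjmem w hw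
      have hspan := aux_span_j comp hone hunit hquad hjmem hjj hjc
      have hjne : j ≠ 0 := by
        intro h
        rw [h, mul_zero] at hjj
        apply htriv
        rw [← neg_eq_zero]
        exact hjj.symm
      -- φ j = -j
      have hφj : φ j = -j := by
        obtain ⟨r'', s'', hφr'', hq''⟩ := hφz j hjmem
        rw [hjj, sub_neg_eq_add] at hq''
        have h0 : (1 - s'') • (1 : D) + r'' • j = 0 := by
          rw [sub_smul, one_smul, ← hq'']
          abel
        have hr0 : r'' = 0 := (hindep _ _ h0).2
        rw [hφr'', hr0, zero_smul, zero_sub]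
      have hφform : ∀ a b : ℝ, φ (a • (1 : D) + b • j) = a • (1 : D) - b • j := by
        intro a b
        rw [map_add, map_smul, map_smul, hφ1, hφj, smul_neg, ← sub_eq_add_neg]
      -- epsilon for each homogeneous unit
      have hε : ∀ u : ↥T, ∃ ε : ℝ, (ε = 1 ∨ ε = -1) ∧
          j * (X u : D) = ε • ((X u : D) * j) := by
        intro u
        have hwwi : (X u : D) * (((X u)⁻¹ : Dˣ) : D) = 1 := Units.mul_inv _
        have hwiw : (((X u)⁻¹ : Dˣ) : D) * (X u : D) = 1 := Units.inv_mul _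
        set w : D := (X u : D)
        set wi : D := (((X u)⁻¹ : Dˣ) : D)
        have hkmem : wi * (j * w) ∈ comp (1 : G) := by
          have h1 := hmul _ _ _ _ hjmem (hX u)
          have h2 := hmul _ _ _ _ (hXinv u) h1
          have he : ((u : G))⁻¹ * ((1 : G) * (u : G)) = 1 := by group
          rwa [he] at h2
        have hkk : (wi * (j * w)) * (wi * (j * w)) = -1 := by
          have e1 : (wi * (j * w)) * (wi * (j * w)) = wi * (j * (w * (wi * (j * w)))) := by
            simp only [mul_assoc]
          rw [e1, ← mul_assoc w wi, hwwi, one_mul, ← mul_assoc j j w, hjj,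
            neg_one_mul, mul_neg, hwiw]
        obtain ⟨a, b, hab⟩ := hspan _ hkmem
        have h2 : (a*a - b*b) • (1 : D) + (a*b + b*a) • j = -1 := by
          rw [← aux_mulform hjj, ← hab, hkk]
        have h3 : (a*a - b*b + 1) • (1 : D) + (a*b + b*a) • j = 0 := by
          rw [add_smul, one_smul, add_right_comm, h2]
          abel
        obtain ⟨h4, h5⟩ := hindep _ _ h3
        have ha0 : a = 0 := by nlinarith
        have hb1 : b = 1 ∨ b = -1 := by
          apply mul_self_eq_one_iff.1
          nlinarith
        refine ⟨b, hb1, ?_⟩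
        have hkbj : wi * (j * w) = b • j := by rw [hab, ha0, zero_smul, zero_add]
        have hwk : w * (wi * (j * w)) = j * w := by rw [← mul_assoc, hwwi, one_mul]
        rw [← hwk, hkbj, mul_smul_comm]
      -- finrank = 2
      have hrank : Module.finrank ℝ ↥(comp (1 : G)) = 2 := by
        set v : Fin 2 → ↥(comp (1 : G)) := ![⟨j, hjmem⟩, ⟨(1 : D), hone⟩] with hv
        have hv0 : v 0 = ⟨j, hjmem⟩ := rfl
        have hv1 : v 1 = ⟨(1 : D), hone⟩ := rfl
        have hli : LinearIndependent ℝ v := by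
          rw [linearIndependent_fin2]
          constructor
          · rw [hv1]
            intro h
            exact htriv (congrArg Subtype.val h)
          · intro a h
            rw [hv0, hv1] at h
            have haj : a • (1 : D) = j := congrArg Subtype.val h
            have hsq : (a * a) • (1 : D) = -1 := by
              have e2 : (a • (1:D)) * (a • (1:D)) = (a*a) • (1:D) := by
                rw [smul_mul_assoc, mul_smul_comm, smul_smul, mul_one]
              rw [← e2, haj, hjj]
            have h2 : (a*a + 1) • (1 : D) = 0 := by
              rw [add_smul, hsq, one_smul]
              abel
            have : a*a + 1 ≠ 0 := by nlinarith
            exact htriv (aux_smul_cancel this h2)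
        have hsp : ⊤ ≤ Submodule.span ℝ (Set.range v) := by
          rintro ⟨w, hw⟩ _
          obtain ⟨a, b, hab⟩ := hspan w hw
          have hrange : Set.range v = {v 0, v 1} := by
            rw [hv]
            rw [Matrix.range_cons, Matrix.range_cons, Matrix.range_empty]
            simp [Set.pair_comm]
          rw [hrange, Submodule.mem_span_pair]
          refine ⟨b, a, ?_⟩
          apply Subtype.ext
          rw [hv0, hv1]
          push_cast
          rw [hab]
          abel
        rw [Module.finrank_eq_card_basis (Module.Basis.mk hli hsp)]
        simp
      -- a noncentral homogeneous unit anticommuting with j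
      have hncen : ∃ x : D, j * x ≠ x * j := by
        by_contra hcen
        push_neg at hcen
        apply hexc
        refine ⟨hrank, ?_⟩
        intro z hz x
        obtain ⟨a, b, rfl⟩ := hspan z hz
        rw [add_mul, mul_add, smul_mul_assoc, smul_mul_assoc, mul_smul_comm,
          mul_smul_comm, one_mul, mul_one, hcen x]
      obtain ⟨x0, hx0⟩ := hncen
      obtain ⟨g0, y0, hy0mem, hy0⟩ := aux_homog_noncomm comp hint hx0
      have hy0ne : y0 ≠ 0 := by
        rintro rfl
        exact hy0 (by rw [mul_zero, zero_mul])
      have hg0T : g0 ∈ T := by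
        apply (hT g0).1
        intro hbot
        rw [hbot] at hy0mem
        exact hy0ne (by simpa using hy0mem)
      obtain ⟨ε', hε'or, hε'eq⟩ := hε ⟨g0, hg0T⟩
      set y' : D := (X ⟨g0, hg0T⟩ : D) with hy'def
      set yi' : D := (((X ⟨g0, hg0T⟩)⁻¹ : Dˣ) : D) with hyi'def
      have hy'yi' : y' * yi' = 1 := Units.mul_inv _
      have hyi'y' : yi' * y' = 1 := Units.inv_mul _
      have hy'mem : y' ∈ comp g0 := hX ⟨g0, hg0T⟩
      have hyi'mem : yi' ∈ comp g0⁻¹ := hXinv ⟨g0, hg0T⟩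
      have hjy' : j * y' = -(y' * j) := by
        rcases hε'or with h1 | h1
        · exfalso
          have hjX : j * y' = y' * j := by rw [hε'eq, h1, one_smul]
          have hz'mem : y0 * yi' ∈ comp (1 : G) := by
            have h2 := hmul g0 g0⁻¹ _ _ hy0mem hyi'mem
            rwa [mul_inv_cancel] at h2
          have hy0eq : y0 = (y0 * yi') * y' := by
            rw [mul_assoc, hyi'y', mul_one]
          apply hy0
          rw [hy0eq, ← mul_assoc, hcomm j hjmem _ hz'mem, mul_assoc, hjX, ← mul_assoc,
            mul_assoc]
        · rw [hε'eq, h1, neg_one_smul]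
      have hy'j : y' * j = -(j * y') := by rw [hjy', neg_neg]
      obtain ⟨ε, hεor, hεeq⟩ := hε t
      obtain ⟨a, b, hdab⟩ := hspan d hdmem
      have hφd : φ d = a • (1 : D) - b • j := by rw [hdab, hφform]
      rcases hεor with hε1 | hεm1
      · -- ε = 1 : X t commutes with j; must show b = 0
        have hjy : j * y = y * j := by rw [hεeq, hε1, one_smul]
        have hycomm : ∀ w ∈ comp (1 : G), y * w = w * y := by
          intro w hw
          obtain ⟨aw, bw, rfl⟩ := hspan w hw
          rw [mul_add, add_mul, mul_smul_comm, mul_smul_comm, smul_mul_assoc,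
            smul_mul_assoc, mul_one, one_mul, hjy]
        -- z₀ = (y y')(yi yi')
        have hz₀mem : ((y * y') * (yi * yi')) ∈ comp (1 : G) := by
          have h1 := hmul _ _ _ _ hymem hy'mem
          have h2 := hmul _ _ _ _ hyimem hyi'mem
          have h3 := hmul _ _ _ _ h1 h2
          have he : ((t : G) * g0) * (((t : G))⁻¹ * g0⁻¹) = 1 := by
            rw [mul_comm ((t : G))⁻¹ g0⁻¹, mul_assoc, ← mul_assoc g0 g0⁻¹,
              mul_inv_cancel, one_mul, mul_inv_cancel]
          rwa [he] at h3
        set z₀ : D := (y * y') * (yi * yi') with hz₀def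
        have hin : (yi * yi') * (y' * y) = 1 := by
          rw [mul_assoc, ← mul_assoc yi' y' y, hyi'y', one_mul, hyiy]
        have hz₀rel : z₀ * (y' * y) = y * y' := by
          rw [hz₀def, mul_assoc, hin, mul_one]
        -- φ applied
        have hφz₀rel : (y * y') * φ z₀ = y' * y := by
          have h1 := congrArg φ hz₀rel
          rw [hanti z₀ (y' * y), hanti y' y, hanti y y', hφX t, hφX ⟨g0, hg0T⟩] at h1
          simp only [smul_mul_assoc, mul_smul_comm, smul_smul] at h1
          have hηne : η ⟨g0, hg0T⟩ * η t ≠ 0 := by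
            rcases hη t with h | h <;> rcases hη ⟨g0, hg0T⟩ with h' | h' <;>
              rw [h, h'] <;> norm_num
          rw [mul_comm (η t) (η ⟨g0, hg0T⟩)] at h1
          exact aux_smul_cancel' hηne h1
        -- coordinates of z₀
        obtain ⟨a₀, b₀, hz₀ab⟩ := hspan z₀ hz₀mem
        have hjB : j * (y' * y) = -((y' * y) * j) := by
          rw [← mul_assoc j y' y, hjy', neg_mul, mul_assoc y' j y, hjy, ← mul_assoc y' y j]
        have hyy' : y * y' = a₀ • (y' * y) - b₀ • ((y' * y) * j) := by
          rw [← hz₀rel, hz₀ab, add_mul, smul_mul_assoc, smul_mul_assoc, one_mul,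
            hjB, smul_neg, ← sub_eq_add_neg]
        have hφz₀ : φ z₀ = a₀ • (1 : D) - b₀ • j := by rw [hz₀ab, hφform]
        have step1 : (y * y') * φ z₀ = a₀ • (y * y') - b₀ • ((y * y') * j) := by
          rw [hφz₀, mul_sub, mul_smul_comm, mul_smul_comm, mul_one]
        have step2 : (y * y') * j = a₀ • ((y' * y) * j) + b₀ • (y' * y) := by
          rw [hyy', sub_mul, smul_mul_assoc, smul_mul_assoc, mul_assoc (y' * y) j j,
            hjj, mul_neg, mul_one, smul_neg, sub_neg_eq_add]
        have e3 : (y * y') * φ z₀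
            = (a₀*a₀ - b₀*b₀) • (y' * y) - (a₀*b₀ + b₀*a₀) • ((y' * y) * j) := by
          rw [step1, step2, hyy']
          module
        have step3 : (a₀*a₀ - b₀*b₀) • (y' * y) - (a₀*b₀ + b₀*a₀) • ((y' * y) * j)
            = y' * y := by
          rw [← e3]
          exact hφz₀rel
        have hBij : (yi * yi') * ((y' * y) * j) = j := by
          rw [← mul_assoc, hin, one_mul]
        have step4 : (a₀*a₀ - b₀*b₀) • (1 : D) - (a₀*b₀ + b₀*a₀) • j = 1 := by
          have h5 := congrArg (fun u => (yi * yi') * u) step3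
          simp only [mul_sub, mul_smul_comm] at h5
          rwa [hin, hBij] at h5
        have step5 : (a₀*a₀ - b₀*b₀ - 1) • (1 : D) + (-(a₀*b₀ + b₀*a₀)) • j = 0 := by
          have e5 : (a₀*a₀ - b₀*b₀ - 1) • (1 : D) + (-(a₀*b₀ + b₀*a₀)) • j
              = ((a₀*a₀ - b₀*b₀) • (1 : D) - (a₀*b₀ + b₀*a₀) • j) - (1:D) := by
            module
          rw [e5, step4, sub_self]
        obtain ⟨hA, hBc⟩ := hindep _ _ step5
        have hb₀0 : b₀ = 0 := by
          by_contra hb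
          have ha₀0 : a₀ = 0 := by
            have hab0 : a₀ * b₀ = 0 := by nlinarith
            exact (mul_eq_zero.1 hab0).resolve_right hb
          nlinarith
        have ha₀ne : a₀ ≠ 0 := by
          intro h
          rw [h, hb₀0] at hA
          norm_num at hA
        have hz₀val : z₀ = a₀ • (1 : D) := by
          rw [hz₀ab, hb₀0, zero_smul, add_zero]
        have hψz₀ : ψ z₀ = a₀ • (1 : D) := by rw [hz₀val, hψs]
        -- d' for t'
        have hd'mem : ψ y' * yi' ∈ comp (1 : G) := by
          have h6 := hmul g0 g0⁻¹ _ _ (hψ _ y' hy'mem) hyi'mem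
          rwa [mul_inv_cancel] at h6
        set d' : D := ψ y' * yi' with hd'def
        have hd'y : ψ y' = d' * y' := by rw [hd'def, mul_assoc, hyi'y', mul_one]
        have hd'unit : IsUnit d' := ((X ⟨g0, hg0T⟩).isUnit.map ψ).mul ((X ⟨g0, hg0T⟩)⁻¹).isUnit
        have hy'd : y' * d = (a • (1 : D) - b • j) * y' := by
          rw [hdab, mul_add, sub_mul, mul_smul_comm, mul_smul_comm, smul_mul_assoc,
            smul_mul_assoc, mul_one, one_mul, hy'j, smul_neg, ← sub_eq_add_neg]
        have hL2 : ψ y' * ψ y = (d' * (a • (1 : D) - b • j)) * (y' * y) := by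
          rw [hd'y, hdy, mul_assoc d' y' (d * y), ← mul_assoc y' d y, hy'd,
            mul_assoc (a • (1 : D) - b • j) y' y, ← mul_assoc d' _ _]
        have hR2 : ψ y * ψ y' = (d * d') * (y * y') := by
          rw [hdy, hd'y, mul_assoc d y (d' * y'), ← mul_assoc y d' y',
            hycomm d' hd'mem, mul_assoc d' y y', ← mul_assoc d d' (y * y')]
        have hyy'0 : y * y' = a₀ • (y' * y) := by
          rw [hyy', hb₀0, zero_smul, sub_zero]
        have hψrel := congrArg ψ hz₀rel
        rw [map_mul ψ z₀ (y' * y), map_mul ψ y' y, map_mul ψ y y', hψz₀, hL2, hR2,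
          hyy'0, smul_mul_assoc, one_mul, mul_smul_comm] at hψrel
        have hfin2 : (d' * (a • (1 : D) - b • j)) * (y' * y) = (d * d') * (y' * y) :=
          aux_smul_cancel' ha₀ne hψrel
        have hval : ((X ⟨g0, hg0T⟩ * X t : Dˣ) : D) = y' * y := rfl
        have hfin3 : d' * (a • (1 : D) - b • j) = d * d' := by
          apply (Units.mul_left_inj (X ⟨g0, hg0T⟩ * X t)).1
          rw [hval]
          exact hfin2
        have hfin4 : a • (1 : D) - b • j = d := by
          apply hd'unit.mul_left_cancel
          rw [hfin3, hcomm d hdmem d' hd'mem]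
        have hb0 : b = 0 := by
          have h7 : (a • (1 : D) + b • j) - (a • (1 : D) - b • j) = 0 :=
            sub_eq_zero.2 (hfin4.trans hdab).symm
          have h8 : (b + b) • j = (a • (1 : D) + b • j) - (a • (1 : D) - b • j) := by
            module
          rw [h7] at h8
          by_contra hb
          have hbne : b + b ≠ 0 := by intro hx; apply hb; linarith
          exact hjne (aux_smul_cancel hbne h8)
        rw [hdab, hb0, zero_smul, add_zero, hφs, smul_mul_assoc, mul_smul_comm,
          one_mul, mul_one]
      · -- ε = -1
        have hjy : j * y = -(y * j) := by rw [hεeq, hεm1, neg_one_smul]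
        rw [hφd, hdab]
        simp only [add_mul, mul_add, sub_mul, mul_sub, smul_mul_assoc, mul_smul_comm,
          one_mul, mul_one, hjy, smul_neg]
        abel
  · -- noncommutative identity component
    have hcent := hXcent hcomm
    have hinj : Function.Injective (LinearMap.restrict (ψ : D →ₗ[ℝ] D) (hψ 1)) := by
      intro a b hab
      have h1 : ψ (a : D) = ψ (b : D) := by
        have := congrArg Subtype.val hab
        exact this
      exact Subtype.ext (ψ.injective h1)
    have hsur := (LinearMap.injective_iff_surjective).1 hinj
    have hsurj : ∀ w ∈ comp (1 : G), ∃ z ∈ comp (1 : G), ψ z = w := by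
      intro w hw
      obtain ⟨z, hzeq⟩ := hsur ⟨w, hw⟩
      refine ⟨z, z.2, ?_⟩
      have := congrArg Subtype.val hzeq
      exact this
    have hdcomm : ∀ w ∈ comp (1 : G), d * w = w * d := by
      intro w hw
      obtain ⟨z, hz, hzw⟩ := hsurj w hw
      have h1 : y * z = z * y := hcent t z hz
      have h2 : ψ y * w = w * ψ y := by
        rw [← hzw, ← map_mul, ← map_mul, h1]
      rw [hdy] at h2
      have h3 : y * w = w * y := hcent t w hw
      have h4 : (d * w) * y = (w * d) * y := by
        calc (d * w) * y = d * (w * y) := mul_assoc _ _ _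
        _ = d * (y * w) := by rw [h3]
        _ = (d * y) * w := (mul_assoc _ _ _).symm
        _ = w * (d * y) := h2
        _ = (w * d) * y := (mul_assoc _ _ _).symm
      exact (Units.mul_left_inj (X t)).1 h4
    obtain ⟨c, hc⟩ := aux_center comp hone hunit hquad hcomm hdmem hdcomm
    rw [hc, hφs, smul_mul_assoc, mul_smul_comm, one_mul, mul_one]
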